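/- Let A ∈ R^{m×n} and let C ∈ R^{m×k}, R ∈ R^{k×n} have full rank k. With M = C⁺ A R⁺, one has A - C M R = (I - C C⁺) A + C C⁺ A (I - R⁺ R), and hence ‖A - C M R‖ ≤ ‖(I - C C⁺) A‖ + ‖A (I - R⁺ R)‖ in the spectral norm. -/

import Mathlib

open Matrix
open scoped Matrix.Norms.L2Operator

/-- Moore–Penrose pseudoinverse of a full-column-rank matrix: `C⁺ = (Cᵀ C)⁻¹ Cᵀ`. -/
noncomputable def leftPinv {m k : ℕ} (C : Matrix (Fin m) (Fin k) ℝ) : Matrix (Fin k) (Fin m) ℝ :=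
  (Cᵀ * C)⁻¹ * Cᵀ

/-- Moore–Penrose pseudoinverse of a full-row-rank matrix: `R⁺ = Rᵀ (R Rᵀ)⁻¹`. -/
noncomputable def rightPinv {k n : ℕ} (R : Matrix (Fin k) (Fin n) ℝ) : Matrix (Fin n) (Fin k) ℝ :=
  Rᵀ * (R * Rᵀ)⁻¹

/-- With `M = C⁺ A R⁺` one has
`A - C M R = (I - C C⁺) A + C C⁺ A (I - R⁺ R)` and hence
`‖A - C M R‖ ≤ ‖(I - C C⁺) A‖ + ‖A (I - R⁺ R)‖` in the spectral norm. -/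
theorem cur_error_split_and_bound {m n k : ℕ}
    (A : Matrix (Fin m) (Fin n) ℝ) (C : Matrix (Fin m) (Fin k) ℝ) (R : Matrix (Fin k) (Fin n) ℝ)
    (hC : IsUnit (Cᵀ * C).det) (hR : IsUnit (R * Rᵀ).det) :
    A - C * (leftPinv C * A * rightPinv R) * R =
        (1 - C * leftPinv C) * A + C * leftPinv C * A * (1 - rightPinv R * R) ∧
    ‖A - C * (leftPinv C * A * rightPinv R) * R‖ ≤
        ‖(1 - C * leftPinv C) * A‖ + ‖A * (1 - rightPinv R * R)‖ := by
  have heq : A - C * (leftPinv C * A * rightPinv R) * R =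
      (1 - C * leftPinv C) * A + C * leftPinv C * A * (1 - rightPinv R * R) := by
    have h : C * (leftPinv C * A * rightPinv R) * R =
        C * leftPinv C * A * (rightPinv R * R) := by
      simp only [Matrix.mul_assoc]
    rw [Matrix.sub_mul, Matrix.one_mul, Matrix.mul_sub, Matrix.mul_one, h]
    abel
  refine ⟨heq, ?_⟩
  -- P := C C⁺ is a symmetric idempotent projector
  set P : Matrix (Fin m) (Fin m) ℝ := C * leftPinv C with hP
  have hCpC : leftPinv C * C = 1 := by
    rw [leftPinv, Matrix.mul_assoc, Matrix.nonsing_inv_mul _ hC]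
  have hPsym : Pᵀ = P := by
    rw [hP, leftPinv, Matrix.transpose_mul, Matrix.transpose_mul,
      Matrix.transpose_nonsing_inv, Matrix.transpose_mul, Matrix.transpose_transpose,
      Matrix.mul_assoc]
  have hPidem : P * P = P := by
    rw [hP, Matrix.mul_assoc, ← Matrix.mul_assoc (leftPinv C), hCpC, Matrix.one_mul]
  have hPnorm : ‖P‖ ≤ 1 := by
    have h1 : ‖P‖ * ‖P‖ = ‖P‖ := by
      have := Matrix.l2_opNorm_conjTranspose_mul_self P
      rw [Matrix.conjTranspose_eq_transpose_of_trivial, hPsym, hPidem] at this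
      exact this.symm
    nlinarith [norm_nonneg P]
  calc ‖A - C * (leftPinv C * A * rightPinv R) * R‖
      = ‖(1 - P) * A + P * (A * (1 - rightPinv R * R))‖ := by
        rw [heq, Matrix.mul_assoc (C * leftPinv C) A]
    _ ≤ ‖(1 - P) * A‖ + ‖P * (A * (1 - rightPinv R * R))‖ := norm_add_le _ _
    _ ≤ ‖(1 - P) * A‖ + ‖P‖ * ‖A * (1 - rightPinv R * R)‖ := by
        exact add_le_add le_rfl (Matrix.l2_opNorm_mul P (A * (1 - rightPinv R * R)))
    _ ≤ ‖(1 - P) * A‖ + 1 * ‖A * (1 - rightPinv R * R)‖ := by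
        exact add_le_add le_rfl (mul_le_mul_of_nonneg_right hPnorm (norm_nonneg _))
    _ = ‖(1 - P) * A‖ + ‖A * (1 - rightPinv R * R)‖ := by rw [one_mul]
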